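/- Let ν₀, ν₁, ν₂ ∈ (0,1], and consider the three noisy Pauli binary qubit POVMs with effects M_z = (1/2)(I + (−1)^z ν₀ σ_x), N_z = (1/2)(I + (−1)^z ν₁ σ_y), R_z = (1/2)(I + (−1)^z ν₂ σ_z), z ∈ {0,1}. Then the following are equivalent: (1) for every permutation assigning one measurement as the 'pure' one and the other two as the mixed pair, and every q ∈ [0,1], the pure measurement and the disjoint-convex-mixture (q·(first of pair)_z + (1−q)·(second of pair)_z)_z are not jointly measurable; (2) min{ ν₀² + ν₁²ν₂²/(ν₁²+ν₂²), ν₁² + ν₀²ν₂²/(ν₀²+ν₂²), ν₂² + ν₀²ν₁²/(ν₀²+ν₁²) } > 1. -/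

import Mathlib

open Matrix Finset
open scoped ComplexOrder

noncomputable section

/-- A `d`-outcome POVM on `ℂ^n`: positive semidefinite effects summing to the identity. -/
def IsPOVM {n d : ℕ} (M : Fin d → Matrix (Fin n) (Fin n) ℂ) : Prop :=
  (∀ z, (M z).PosSemidef) ∧ ∑ z, M z = 1

/-- Coarse-graining of a `d`-outcome POVM along `f : Fin d → Fin k`. -/
def coarseGrain {n d k : ℕ} (M : Fin d → Matrix (Fin n) (Fin n) ℂ) (f : Fin d → Fin k)
    (z' : Fin k) : Matrix (Fin n) (Fin n) ℂ :=
  ∑ z ∈ Finset.univ.filter (fun z => f z = z'), M z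

/-- Compatibility of a finite family of `d`-outcome POVMs: existence of a parent POVM
`G` together with classical post-processings `p`. -/
def Compatible {n m d : ℕ} (M : Fin m → Fin d → Matrix (Fin n) (Fin n) ℂ) : Prop :=
  ∃ (L : ℕ) (G : Fin L → Matrix (Fin n) (Fin n) ℂ) (p : Fin m → Fin d → Fin L → ℝ),
    (∀ l, (G l).PosSemidef) ∧ (∑ l, G l = 1) ∧
    (∀ x z l, 0 ≤ p x z l) ∧ (∀ x l, ∑ z, p x z l = 1) ∧
    (∀ x z, M x z = ∑ l, (p x z l : ℂ) • G l)

/-- Joint measurability of two POVMs via a joint parent POVM with marginals `A` and `B`. -/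
def JointlyMeasurable {n a b : ℕ} (A : Fin a → Matrix (Fin n) (Fin n) ℂ)
    (B : Fin b → Matrix (Fin n) (Fin n) ℂ) : Prop :=
  ∃ G : Fin a → Fin b → Matrix (Fin n) (Fin n) ℂ,
    (∀ i j, (G i j).PosSemidef) ∧ (∑ i, ∑ j, G i j = 1) ∧
    (∀ i, A i = ∑ j, G i j) ∧ (∀ j, B j = ∑ i, G i j)

/-- The Pauli matrix `σ_x`. -/
def σx : Matrix (Fin 2) (Fin 2) ℂ := !![0, 1; 1, 0]

/-- The Pauli matrix `σ_y`. -/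
def σy : Matrix (Fin 2) (Fin 2) ℂ := !![0, -Complex.I; Complex.I, 0]

/-- The Pauli matrix `σ_z`. -/
def σz : Matrix (Fin 2) (Fin 2) ℂ := !![1, 0; 0, -1]

/-- The noisy Pauli binary qubit POVMs: effects `(1/2)(I + (−1)^z ν_i σ_i)` for
`σ_0 = σ_x, σ_1 = σ_y, σ_2 = σ_z`. -/
def noisyPauli (ν : Fin 3 → ℝ) (i : Fin 3) (z : Fin 2) : Matrix (Fin 2) (Fin 2) ℂ :=
  (1/2 : ℂ) • (1 + (((-1 : ℂ)) ^ (z : ℕ) * (ν i : ℂ)) • ![σx, σy, σz] i)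

/-! ### Auxiliary development -/

/-- The binary qubit POVM with Bloch vector `(a₁, a₂, a₃)`, written out entrywise. -/
def eff (a₁ a₂ a₃ : ℝ) (z : Fin 2) : Matrix (Fin 2) (Fin 2) ℂ :=
  !![(((1 + (-1)^(z:ℕ) * a₃)/2 : ℝ) : ℂ),
     ((((-1)^(z:ℕ) * a₁)/2 : ℝ) : ℂ) - ((((-1)^(z:ℕ) * a₂)/2 : ℝ) : ℂ) * Complex.I;
     ((((-1)^(z:ℕ) * a₁)/2 : ℝ) : ℂ) + ((((-1)^(z:ℕ) * a₂)/2 : ℝ) : ℂ) * Complex.I,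
     (((1 - (-1)^(z:ℕ) * a₃)/2 : ℝ) : ℂ)]

lemma noisyPauli_zero (ν : Fin 3 → ℝ) : noisyPauli ν 0 = eff (ν 0) 0 0 := by
  funext z
  ext i j
  fin_cases z <;> fin_cases i <;> fin_cases j <;>
    simp [noisyPauli, eff, σx, Matrix.one_apply, Complex.ext_iff] <;> ring

lemma noisyPauli_one (ν : Fin 3 → ℝ) : noisyPauli ν 1 = eff 0 (ν 1) 0 := by
  funext z
  ext i j
  fin_cases z <;> fin_cases i <;> fin_cases j <;>
    simp [noisyPauli, eff, σy, Matrix.one_apply, Complex.ext_iff] <;> ring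

lemma noisyPauli_two (ν : Fin 3 → ℝ) : noisyPauli ν 2 = eff 0 0 (ν 2) := by
  funext z
  ext i j
  fin_cases z <;> fin_cases i <;> fin_cases j <;>
    simp [noisyPauli, eff, σz, Matrix.one_apply, Complex.ext_iff] <;> ring

lemma mix_eff (q : ℝ) (a₁ a₂ a₃ b₁ b₂ b₃ : ℝ) :
    (fun z => (q : ℂ) • eff a₁ a₂ a₃ z + ((1 - q : ℝ) : ℂ) • eff b₁ b₂ b₃ z)
      = eff (q*a₁ + (1-q)*b₁) (q*a₂ + (1-q)*b₂) (q*a₃ + (1-q)*b₃) := by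
  funext z
  ext i j
  fin_cases z <;> fin_cases i <;> fin_cases j <;>
    simp [eff, Complex.ext_iff] <;> (try ring) <;> exact ⟨trivial, trivial⟩

lemma mix_eff' (q a₁ a₂ a₃ b₁ b₂ b₃ c₁ c₂ c₃ : ℝ)
    (h1 : c₁ = q*a₁ + (1-q)*b₁) (h2 : c₂ = q*a₂ + (1-q)*b₂) (h3 : c₃ = q*a₃ + (1-q)*b₃) :
    (fun z => (q : ℂ) • eff a₁ a₂ a₃ z + ((1 - q : ℝ) : ℂ) • eff b₁ b₂ b₃ z)
      = eff c₁ c₂ c₃ := by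
  subst h1 h2 h3; exact mix_eff q a₁ a₂ a₃ b₁ b₂ b₃

lemma psd2 (x y u v : ℝ) (hx : 0 ≤ x) (hy : 0 ≤ y) (h : u^2 + v^2 ≤ x*y) :
    (!![(x:ℂ), (u:ℂ) - (v:ℂ)*Complex.I; (u:ℂ) + (v:ℂ)*Complex.I, (y:ℂ)]).PosSemidef := by
  refine Matrix.PosSemidef.of_dotProduct_mulVec_nonneg ?_ ?_
  · ext i j
    fin_cases i <;> fin_cases j <;>
      simp [Matrix.conjTranspose_apply, Complex.ext_iff]
  · intro w
    set p := (w 0).re; set q := (w 0).im; set r := (w 1).re; set s := (w 1).im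
    have hE : star w ⬝ᵥ (!![(x:ℂ), (u:ℂ) - (v:ℂ)*Complex.I; (u:ℂ) + (v:ℂ)*Complex.I, (y:ℂ)]).mulVec w
        = ((x*(p^2+q^2) + y*(r^2+s^2) + 2*u*(p*r+q*s) + 2*v*(p*s-q*r) : ℝ) : ℂ) := by
      simp only [Matrix.mulVec, dotProduct, Fin.sum_univ_two, Matrix.of_apply,
        Matrix.cons_val', Matrix.cons_val_zero, Matrix.cons_val_one, Matrix.head_cons,
        Matrix.head_fin_const, Matrix.empty_val', Matrix.cons_val_fin_one, Pi.star_apply,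
        Complex.star_def]
      simp only [Complex.ext_iff, Complex.add_re, Complex.add_im, Complex.mul_re,
        Complex.mul_im, Complex.sub_re, Complex.sub_im, Complex.ofReal_re, Complex.ofReal_im,
        Complex.I_re, Complex.I_im, Complex.conj_re, Complex.conj_im]
      constructor <;> ring
    rw [hE]
    rw [Complex.zero_le_real]
    rcases eq_or_lt_of_le hx with hx0 | hx0
    · have hu : u^2 ≤ 0 := by nlinarith
      have hv : v^2 ≤ 0 := by nlinarith
      have hu0 : u = 0 := by nlinarith [sq_nonneg u]
      have hv0 : v = 0 := by nlinarith [sq_nonneg v]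
      subst hu0 hv0
      nlinarith [sq_nonneg r, sq_nonneg s, sq_nonneg p, sq_nonneg q,
        mul_nonneg hy (add_nonneg (sq_nonneg r) (sq_nonneg s))]
    · nlinarith [sq_nonneg (x*p + (u*r + v*s)), sq_nonneg (x*q + (u*s - v*r)),
        mul_nonneg (sub_nonneg.2 h) (add_nonneg (sq_nonneg r) (sq_nonneg s))]

lemma psd2' (M : Matrix (Fin 2) (Fin 2) ℂ) (h : M.PosSemidef) :
    0 ≤ (M 0 0).re ∧ (M 0 0).im = 0 ∧ 0 ≤ (M 1 1).re ∧ (M 1 1).im = 0 ∧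
      M 1 0 = (starRingEnd ℂ) (M 0 1) ∧
      (M 0 1).re^2 + (M 0 1).im^2 ≤ (M 0 0).re * (M 1 1).re := by
  have herm := h.1
  have h10 : M 1 0 = (starRingEnd ℂ) (M 0 1) := by
    have := herm.apply 1 0
    simpa [Complex.star_def] using this.symm
  have hform : ∀ w : Fin 2 → ℂ, 0 ≤ (starRingEnd ℂ) (w 0) * (M 0 0 * w 0 + M 0 1 * w 1)
      + (starRingEnd ℂ) (w 1) * (M 1 0 * w 0 + M 1 1 * w 1) := by
    intro w
    have := h.dotProduct_mulVec_nonneg w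
    simpa [Matrix.mulVec, dotProduct, Fin.sum_univ_two, Complex.star_def] using this
  have h00 := hform ![1, 0]
  have h11 := hform ![0, 1]
  simp [Complex.le_def] at h00 h11
  refine ⟨h00.1, h00.2.symm, h11.1, h11.2.symm, h10, ?_⟩
  set a := (M 0 0).re
  set d := (M 1 1).re
  set c := M 0 1
  have hM00 : M 0 0 = (a : ℂ) := by
    apply Complex.ext <;> simp [a, h00.2.symm]
  have hM11 : M 1 1 = (d : ℂ) := by
    apply Complex.ext <;> simp [d, h11.2.symm]
  have key : ∀ t : ℂ, 0 ≤ ((starRingEnd ℂ) c * ((a:ℂ) * c + c * t)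
      + (starRingEnd ℂ) t * ((starRingEnd ℂ) c * c + (d:ℂ) * t)) := by
    intro t
    have := hform ![c, t]
    rw [hM00, hM11, h10] at this
    simpa using this
  rcases lt_or_eq_of_le h00.1 with ha | ha
  · have := key (-(a:ℂ))
    rw [Complex.le_def] at this
    have hre := this.1
    simp only [Complex.add_re, Complex.mul_re, Complex.mul_im, Complex.neg_re, Complex.neg_im,
      Complex.ofReal_re, Complex.ofReal_im, Complex.conj_re, Complex.conj_im, Complex.add_im,
      Complex.zero_re] at hre
    nlinarith [sq_nonneg c.re, sq_nonneg c.im]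
  · rcases lt_or_eq_of_le h11.1 with hd | hd
    · have := hform ![(d:ℂ), -(starRingEnd ℂ) c]
      rw [hM00, hM11, h10] at this
      simp only [Matrix.cons_val_zero, Matrix.cons_val_one, Matrix.head_cons] at this
      rw [Complex.le_def] at this
      have hre := this.1
      simp only [Complex.add_re, Complex.mul_re, Complex.mul_im, Complex.neg_re, Complex.neg_im,
        Complex.ofReal_re, Complex.ofReal_im, Complex.add_im, map_neg,
        Complex.conj_re, Complex.conj_im, Complex.zero_re, Complex.zero_im] at hre
      nlinarith [sq_nonneg c.re, sq_nonneg c.im]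
    · have := key (-1)
      rw [Complex.le_def] at this
      have hre := this.1
      simp only [Complex.add_re, Complex.mul_re, Complex.mul_im, Complex.neg_re, Complex.neg_im,
        Complex.one_re, Complex.one_im, Complex.ofReal_re, Complex.ofReal_im, Complex.add_im,
        Complex.conj_re, Complex.conj_im, Complex.zero_re, Complex.zero_im] at hre
      nlinarith [sq_nonneg c.re, sq_nonneg c.im]

set_option maxHeartbeats 1600000 in
lemma jm_of (a₁ a₂ a₃ b₁ b₂ b₃ : ℝ)
    (h1 : (a₁+b₁)^2 + (a₂+b₂)^2 + (a₃+b₃)^2 ≤ 1)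
    (h2 : (a₁-b₁)^2 + (a₂-b₂)^2 + (a₃-b₃)^2 ≤ 1) :
    JointlyMeasurable (eff a₁ a₂ a₃) (eff b₁ b₂ b₃) := by
  refine ⟨fun z z' => !![((((1 + ((-1)^(z:ℕ)*a₃ + (-1)^(z':ℕ)*b₃))/4 : ℝ)) : ℂ),
      ((((-1)^(z:ℕ)*a₁ + (-1)^(z':ℕ)*b₁)/4 : ℝ) : ℂ)
        - ((((-1)^(z:ℕ)*a₂ + (-1)^(z':ℕ)*b₂)/4 : ℝ) : ℂ) * Complex.I;
      ((((-1)^(z:ℕ)*a₁ + (-1)^(z':ℕ)*b₁)/4 : ℝ) : ℂ)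
        + ((((-1)^(z:ℕ)*a₂ + (-1)^(z':ℕ)*b₂)/4 : ℝ) : ℂ) * Complex.I,
      ((((1 - ((-1)^(z:ℕ)*a₃ + (-1)^(z':ℕ)*b₃))/4 : ℝ)) : ℂ)], ?_, ?_, ?_, ?_⟩
  · intro z z'
    have hc : ((-1:ℝ)^(z:ℕ)*a₁ + (-1)^(z':ℕ)*b₁)^2 + ((-1:ℝ)^(z:ℕ)*a₂ + (-1)^(z':ℕ)*b₂)^2
        + ((-1:ℝ)^(z:ℕ)*a₃ + (-1)^(z':ℕ)*b₃)^2 ≤ 1 := by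
      fin_cases z <;> fin_cases z' <;> simp <;> nlinarith []
    have h3 : ((-1:ℝ)^(z:ℕ)*a₃ + (-1)^(z':ℕ)*b₃)^2 ≤ 1 := by
      nlinarith [sq_nonneg ((-1:ℝ)^(z:ℕ)*a₁ + (-1)^(z':ℕ)*b₁),
        sq_nonneg ((-1:ℝ)^(z:ℕ)*a₂ + (-1)^(z':ℕ)*b₂)]
    exact psd2 _ _ _ _
      (by nlinarith [sq_nonneg (1 + ((-1:ℝ)^(z:ℕ)*a₃ + (-1)^(z':ℕ)*b₃))])
      (by nlinarith [sq_nonneg (1 - ((-1:ℝ)^(z:ℕ)*a₃ + (-1)^(z':ℕ)*b₃))]) (by nlinarith)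
  · ext i j
    simp only [Fin.sum_univ_two, Matrix.add_apply]
    fin_cases i <;> fin_cases j <;>
      simp [Matrix.one_apply, Complex.ext_iff] <;> (try constructor) <;> (try push_cast) <;> ring
  · intro z
    ext i j
    simp only [Fin.sum_univ_two, Matrix.add_apply]
    fin_cases z <;> fin_cases i <;> fin_cases j <;>
      simp [eff, Complex.ext_iff] <;> (try constructor) <;> (try push_cast) <;> (try ring) <;>
        exact ⟨trivial, trivial⟩
  · intro z'
    ext i j
    simp only [Fin.sum_univ_two, Matrix.add_apply]
    fin_cases z' <;> fin_cases i <;> fin_cases j <;>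
      simp [eff, Complex.ext_iff] <;> (try constructor) <;> (try push_cast) <;> (try ring) <;>
        exact ⟨trivial, trivial⟩

lemma vec_tri (x1 x2 x3 y1 y2 y3 L M : ℝ) (hL : 0 ≤ L) (hM : 0 ≤ M)
    (hx : x1^2+x2^2+x3^2 ≤ L^2) (hy : y1^2+y2^2+y3^2 ≤ M^2) :
    (x1-y1)^2+(x2-y2)^2+(x3-y3)^2 ≤ (L+M)^2 := by
  have hxy : (x1*y1+x2*y2+x3*y3)^2 ≤ (L*M)^2 := by
    have hcs : (x1*y1+x2*y2+x3*y3)^2 ≤ (x1^2+x2^2+x3^2)*(y1^2+y2^2+y3^2) := by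
      nlinarith [sq_nonneg (x1*y2-x2*y1), sq_nonneg (x1*y3-x3*y1), sq_nonneg (x2*y3-x3*y2)]
    have h2 : (x1^2+x2^2+x3^2)*(y1^2+y2^2+y3^2) ≤ L^2*M^2 := by
      nlinarith [sq_nonneg y1, sq_nonneg y2, sq_nonneg y3, sq_nonneg L]
    nlinarith
  have h3 : -(L*M) ≤ x1*y1+x2*y2+x3*y3 := by nlinarith [mul_nonneg hL hM]
  nlinarith

lemma jm_bound (a₁ a₂ a₃ b₁ b₂ b₃ : ℝ)
    (h : JointlyMeasurable (eff a₁ a₂ a₃) (eff b₁ b₂ b₃)) :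
    ∃ s t : ℝ, 0 ≤ s ∧ 0 ≤ t ∧ s + t = 2 ∧
      (a₁+b₁)^2 + (a₂+b₂)^2 + (a₃+b₃)^2 ≤ s^2 ∧
      (a₁-b₁)^2 + (a₂-b₂)^2 + (a₃-b₃)^2 ≤ t^2 := by
  obtain ⟨G, hPSD, hsum, hA, hB⟩ := h
  let p : Fin 2 → Fin 2 → ℝ := fun z z' => (G z z' 0 0).re
  let q : Fin 2 → Fin 2 → ℝ := fun z z' => (G z z' 1 1).re
  let r : Fin 2 → Fin 2 → ℝ := fun z z' => (G z z' 0 1).re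
  let m : Fin 2 → Fin 2 → ℝ := fun z z' => (G z z' 0 1).im
  have P := fun z z' => psd2' (G z z') (hPSD z z')
  have row : ∀ z : Fin 2, ∀ i j : Fin 2, eff a₁ a₂ a₃ z i j = G z 0 i j + G z 1 i j := by
    intro z i j
    rw [hA z]; simp [Fin.sum_univ_two]
  have col : ∀ z' : Fin 2, ∀ i j : Fin 2, eff b₁ b₂ b₃ z' i j = G 0 z' i j + G 1 z' i j := by
    intro z' i j
    rw [hB z']; simp [Fin.sum_univ_two]
  have rowRe : ∀ z i j : Fin 2, (eff a₁ a₂ a₃ z i j).re = (G z 0 i j).re + (G z 1 i j).re := by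
    intro z i j; rw [row z i j, Complex.add_re]
  have rowIm : ∀ z i j : Fin 2, (eff a₁ a₂ a₃ z i j).im = (G z 0 i j).im + (G z 1 i j).im := by
    intro z i j; rw [row z i j, Complex.add_im]
  have colRe : ∀ z' i j : Fin 2, (eff b₁ b₂ b₃ z' i j).re = (G 0 z' i j).re + (G 1 z' i j).re := by
    intro z' i j; rw [col z' i j, Complex.add_re]
  have colIm : ∀ z' i j : Fin 2, (eff b₁ b₂ b₃ z' i j).im = (G 0 z' i j).im + (G 1 z' i j).im := by
    intro z' i j; rw [col z' i j, Complex.add_im]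
  have E1 : (1 + a₃)/2 = p 0 0 + p 0 1 := by simpa [eff] using rowRe 0 0 0
  have E2 : (1 - a₃)/2 = q 0 0 + q 0 1 := by simpa [eff] using rowRe 0 1 1
  have E3 : a₁/2 = r 0 0 + r 0 1 := by simpa [eff] using rowRe 0 0 1
  have E4 : -(a₂/2) = m 0 0 + m 0 1 := by simpa [eff] using rowIm 0 0 1
  have E5 : (1 - a₃)/2 = p 1 0 + p 1 1 := by simpa [eff, sub_eq_add_neg] using rowRe 1 0 0
  have E6 : (1 + a₃)/2 = q 1 0 + q 1 1 := by simpa [eff] using rowRe 1 1 1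
  have E7 : -a₁/2 = r 1 0 + r 1 1 := by simpa [eff] using rowRe 1 0 1
  have E8 : -(-a₂/2) = m 1 0 + m 1 1 := by simpa [eff] using rowIm 1 0 1
  have F1 : (1 + b₃)/2 = p 0 0 + p 1 0 := by simpa [eff] using colRe 0 0 0
  have F2 : (1 - b₃)/2 = q 0 0 + q 1 0 := by simpa [eff] using colRe 0 1 1
  have F3 : b₁/2 = r 0 0 + r 1 0 := by simpa [eff] using colRe 0 0 1
  have F4 : -(b₂/2) = m 0 0 + m 1 0 := by simpa [eff] using colIm 0 0 1
  have F5 : (1 - b₃)/2 = p 0 1 + p 1 1 := by simpa [eff, sub_eq_add_neg] using colRe 1 0 0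
  have F7 : -b₁/2 = r 0 1 + r 1 1 := by simpa [eff] using colRe 1 0 1
  have F8 : -(-b₂/2) = m 0 1 + m 1 1 := by simpa [eff] using colIm 1 0 1
  have N : ∀ z z' : Fin 2, (2*r z z')^2 + (-2*m z z')^2 + (p z z' - q z z')^2
      ≤ (p z z' + q z z')^2 := by
    intro z z'
    have := (P z z').2.2.2.2.2
    nlinarith [this]
  have hL : ∀ z z' : Fin 2, 0 ≤ p z z' + q z z' := by
    intro z z'
    exact add_nonneg (P z z').1 (P z z').2.2.1
  refine ⟨p 0 0 + q 0 0 + (p 1 1 + q 1 1), p 0 1 + q 0 1 + (p 1 0 + q 1 0),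
    add_nonneg (hL 0 0) (hL 1 1), add_nonneg (hL 0 1) (hL 1 0), by linarith, ?_, ?_⟩
  · have T := vec_tri (2*r 0 0) (-2*m 0 0) (p 0 0 - q 0 0)
      (2*r 1 1) (-2*m 1 1) (p 1 1 - q 1 1) _ _ (hL 0 0) (hL 1 1) (N 0 0) (N 1 1)
    have e1 : a₁ + b₁ = 2*r 0 0 - 2*r 1 1 := by linarith
    have e2 : a₂ + b₂ = -2*m 0 0 - -2*m 1 1 := by linarith
    have e3 : a₃ + b₃ = (p 0 0 - q 0 0) - (p 1 1 - q 1 1) := by linarith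
    calc (a₁+b₁)^2 + (a₂+b₂)^2 + (a₃+b₃)^2
        = (2*r 0 0 - 2*r 1 1)^2 + (-2*m 0 0 - -2*m 1 1)^2
          + ((p 0 0 - q 0 0) - (p 1 1 - q 1 1))^2 := by rw [e1, e2, e3]
      _ ≤ _ := T
  · have T := vec_tri (2*r 0 1) (-2*m 0 1) (p 0 1 - q 0 1)
      (2*r 1 0) (-2*m 1 0) (p 1 0 - q 1 0) _ _ (hL 0 1) (hL 1 0) (N 0 1) (N 1 0)
    have e1 : a₁ - b₁ = 2*r 0 1 - 2*r 1 0 := by linarith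
    have e2 : a₂ - b₂ = -2*m 0 1 - -2*m 1 0 := by linarith
    have e3 : a₃ - b₃ = (p 0 1 - q 0 1) - (p 1 0 - q 1 0) := by linarith
    calc (a₁-b₁)^2 + (a₂-b₂)^2 + (a₃-b₃)^2
        = (2*r 0 1 - 2*r 1 0)^2 + (-2*m 0 1 - -2*m 1 0)^2
          + ((p 0 1 - q 0 1) - (p 1 0 - q 1 0))^2 := by rw [e1, e2, e3]
      _ ≤ _ := T

lemma final (α β γ u v s t : ℝ) (hβ : 0 < β) (hγ : 0 < γ) (huv : u + v = 1)
    (hs : 0 ≤ s) (ht : 0 ≤ t) (hst : s + t = 2)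
    (h1 : α^2 + (u*β)^2 + (v*γ)^2 ≤ s^2) (h2 : α^2 + (u*β)^2 + (v*γ)^2 ≤ t^2)
    (hmin : 1 < α^2 + β^2*γ^2/(β^2+γ^2)) : False := by
  have hden : (0:ℝ) < β^2 + γ^2 := by positivity
  have hq : β^2*γ^2/(β^2+γ^2) ≤ (u*β)^2 + (v*γ)^2 := by
    rw [div_le_iff₀ hden]
    have hv : v = 1 - u := by linarith
    subst hv
    nlinarith [sq_nonneg (u*(β^2+γ^2) - γ^2)]
  set D := α^2 + (u*β)^2 + (v*γ)^2 with hD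
  have hD0 : 0 ≤ D := by positivity
  have hD1 : D ≤ 1 := by
    nlinarith [mul_le_mul h1 h2 hD0 (sq_nonneg s), sq_nonneg (s-t), mul_nonneg hs ht,
      sq_nonneg (s*t - 1)]
  linarith

/-! ### Main theorem -/

set_option maxHeartbeats 4000000 in
/-- The three noisy Pauli measurements are fully incompatible w.r.t. disjoint-convex-mixing iff
`min{ν₀² + ν₁²ν₂²/(ν₁²+ν₂²), ν₁² + ν₀²ν₂²/(ν₀²+ν₂²), ν₂² + ν₀²ν₁²/(ν₀²+ν₁²)} > 1`. -/
theorem noisy_pauli_fully_incompatible_iff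
    (ν : Fin 3 → ℝ) (hν : ∀ i, ν i ∈ Set.Ioc (0 : ℝ) 1) :
    (∀ i j k : Fin 3, i ≠ j → j ≠ k → i ≠ k → ∀ q ∈ Set.Icc (0 : ℝ) 1,
      ¬ JointlyMeasurable (noisyPauli ν i)
        (fun z => (q : ℂ) • noisyPauli ν j z + ((1 - q : ℝ) : ℂ) • noisyPauli ν k z)) ↔
    min (ν 0 ^ 2 + ν 1 ^ 2 * ν 2 ^ 2 / (ν 1 ^ 2 + ν 2 ^ 2))
      (min (ν 1 ^ 2 + ν 0 ^ 2 * ν 2 ^ 2 / (ν 0 ^ 2 + ν 2 ^ 2))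
        (ν 2 ^ 2 + ν 0 ^ 2 * ν 1 ^ 2 / (ν 0 ^ 2 + ν 1 ^ 2))) > 1 := by
  have h0 := (hν 0).1
  have h1 := (hν 1).1
  have h2 := (hν 2).1
  constructor
  · intro H
    rw [gt_iff_lt, lt_min_iff, lt_min_iff]
    refine ⟨?_, ?_, ?_⟩
    · by_contra hc
      push_neg at hc
      have hden : (0:ℝ) < ν 1 ^ 2 + ν 2 ^ 2 := by positivity
      set q₀ : ℝ := ν 2 ^ 2 / (ν 1 ^ 2 + ν 2 ^ 2) with hq₀
      have hq₀0 : 0 ≤ q₀ := by positivity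
      have hq₀1 : q₀ ≤ 1 := by
        rw [hq₀, div_le_one hden]; nlinarith
      have hval : (q₀ * ν 1)^2 + ((1 - q₀) * ν 2)^2 = ν 1 ^ 2 * ν 2 ^ 2 / (ν 1 ^ 2 + ν 2 ^ 2) := by
        rw [hq₀]; field_simp; ring
      refine H 0 1 2 (by decide) (by decide) (by decide) q₀ ⟨hq₀0, hq₀1⟩ ?_
      rw [noisyPauli_zero, noisyPauli_one, noisyPauli_two,
        mix_eff' q₀ 0 (ν 1) 0 0 0 (ν 2) 0 (q₀ * ν 1) ((1 - q₀) * ν 2)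
          (by ring) (by ring) (by ring)]
      exact jm_of _ _ _ _ _ _ (by nlinarith) (by nlinarith)
    · by_contra hc
      push_neg at hc
      have hden : (0:ℝ) < ν 0 ^ 2 + ν 2 ^ 2 := by positivity
      set q₀ : ℝ := ν 2 ^ 2 / (ν 0 ^ 2 + ν 2 ^ 2) with hq₀
      have hq₀0 : 0 ≤ q₀ := by positivity
      have hq₀1 : q₀ ≤ 1 := by
        rw [hq₀, div_le_one hden]; nlinarith
      have hval : (q₀ * ν 0)^2 + ((1 - q₀) * ν 2)^2 = ν 0 ^ 2 * ν 2 ^ 2 / (ν 0 ^ 2 + ν 2 ^ 2) := by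
        rw [hq₀]; field_simp; ring
      refine H 1 0 2 (by decide) (by decide) (by decide) q₀ ⟨hq₀0, hq₀1⟩ ?_
      rw [noisyPauli_one, noisyPauli_zero, noisyPauli_two,
        mix_eff' q₀ (ν 0) 0 0 0 0 (ν 2) (q₀ * ν 0) 0 ((1 - q₀) * ν 2)
          (by ring) (by ring) (by ring)]
      exact jm_of _ _ _ _ _ _ (by nlinarith) (by nlinarith)
    · by_contra hc
      push_neg at hc
      have hden : (0:ℝ) < ν 0 ^ 2 + ν 1 ^ 2 := by positivity
      set q₀ : ℝ := ν 1 ^ 2 / (ν 0 ^ 2 + ν 1 ^ 2) with hq₀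
      have hq₀0 : 0 ≤ q₀ := by positivity
      have hq₀1 : q₀ ≤ 1 := by
        rw [hq₀, div_le_one hden]; nlinarith
      have hval : (q₀ * ν 0)^2 + ((1 - q₀) * ν 1)^2 = ν 0 ^ 2 * ν 1 ^ 2 / (ν 0 ^ 2 + ν 1 ^ 2) := by
        rw [hq₀]; field_simp; ring
      refine H 2 0 1 (by decide) (by decide) (by decide) q₀ ⟨hq₀0, hq₀1⟩ ?_
      rw [noisyPauli_two, noisyPauli_zero, noisyPauli_one,
        mix_eff' q₀ (ν 0) 0 0 0 (ν 1) 0 (q₀ * ν 0) ((1 - q₀) * ν 1) 0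
          (by ring) (by ring) (by ring)]
      exact jm_of _ _ _ _ _ _ (by nlinarith) (by nlinarith)
  · intro H i j k hij hjk hik q hq hJM
    rw [gt_iff_lt, lt_min_iff, lt_min_iff] at H
    obtain ⟨HA, HB, HC⟩ := H
    have hi : i = 0 ∨ i = 1 ∨ i = 2 := by omega
    have hj : j = 0 ∨ j = 1 ∨ j = 2 := by omega
    have hk : k = 0 ∨ k = 1 ∨ k = 2 := by omega
    rcases hi with rfl | rfl | rfl <;> rcases hj with rfl | rfl | rfl <;>
        rcases hk with rfl | rfl | rfl <;>
      first
      | exact absurd rfl hij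
      | exact absurd rfl hjk
      | exact absurd rfl hik
      | (rw [noisyPauli_zero, noisyPauli_one, noisyPauli_two,
            mix_eff' q 0 (ν 1) 0 0 0 (ν 2) 0 (q * ν 1) ((1-q) * ν 2)
              (by ring) (by ring) (by ring)] at hJM
         obtain ⟨s, t, hs, ht, hst, hb1, hb2⟩ := jm_bound _ _ _ _ _ _ hJM
         exact final (ν 0) (ν 1) (ν 2) q (1-q) s t h1 h2 (by ring) hs ht hst
           (by nlinarith) (by nlinarith) HA)
      | (rw [noisyPauli_zero, noisyPauli_two, noisyPauli_one,
            mix_eff' q 0 0 (ν 2) 0 (ν 1) 0 0 ((1-q) * ν 1) (q * ν 2)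
              (by ring) (by ring) (by ring)] at hJM
         obtain ⟨s, t, hs, ht, hst, hb1, hb2⟩ := jm_bound _ _ _ _ _ _ hJM
         exact final (ν 0) (ν 1) (ν 2) (1-q) q s t h1 h2 (by ring) hs ht hst
           (by nlinarith) (by nlinarith) HA)
      | (rw [noisyPauli_one, noisyPauli_zero, noisyPauli_two,
            mix_eff' q (ν 0) 0 0 0 0 (ν 2) (q * ν 0) 0 ((1-q) * ν 2)
              (by ring) (by ring) (by ring)] at hJM
         obtain ⟨s, t, hs, ht, hst, hb1, hb2⟩ := jm_bound _ _ _ _ _ _ hJM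
         exact final (ν 1) (ν 0) (ν 2) q (1-q) s t h0 h2 (by ring) hs ht hst
           (by nlinarith) (by nlinarith) HB)
      | (rw [noisyPauli_one, noisyPauli_two, noisyPauli_zero,
            mix_eff' q 0 0 (ν 2) (ν 0) 0 0 ((1-q) * ν 0) 0 (q * ν 2)
              (by ring) (by ring) (by ring)] at hJM
         obtain ⟨s, t, hs, ht, hst, hb1, hb2⟩ := jm_bound _ _ _ _ _ _ hJM
         exact final (ν 1) (ν 0) (ν 2) (1-q) q s t h0 h2 (by ring) hs ht hst
           (by nlinarith) (by nlinarith) HB)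
      | (rw [noisyPauli_two, noisyPauli_zero, noisyPauli_one,
            mix_eff' q (ν 0) 0 0 0 (ν 1) 0 (q * ν 0) ((1-q) * ν 1) 0
              (by ring) (by ring) (by ring)] at hJM
         obtain ⟨s, t, hs, ht, hst, hb1, hb2⟩ := jm_bound _ _ _ _ _ _ hJM
         exact final (ν 2) (ν 0) (ν 1) q (1-q) s t h0 h1 (by ring) hs ht hst
           (by nlinarith) (by nlinarith) HC)
      | (rw [noisyPauli_two, noisyPauli_one, noisyPauli_zero,
            mix_eff' q 0 (ν 1) 0 (ν 0) 0 0 ((1-q) * ν 0) (q * ν 1) 0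
              (by ring) (by ring) (by ring)] at hJM
         obtain ⟨s, t, hs, ht, hst, hb1, hb2⟩ := jm_bound _ _ _ _ _ _ hJM
         exact final (ν 2) (ν 0) (ν 1) (1-q) q s t h0 h1 (by ring) hs ht hst
           (by nlinarith) (by nlinarith) HC)
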